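/- arXiv:1906.01850 — 4 statements merged into one kernel-verified Lean document; each statement's English description precedes it below -/
import Mathlib

section
/- Suppose P_n, Q_n are sequences of probability measures with n·H²(P_n, Q_n) → h for some h > 0. Then the total variation distance between the n-fold products satisfies: liminf_n (1 - TV(P_n^n, Q_n^n)) ≥ 1 - (1 - exp(-2h))^{1/2} > 0 and limsup_n (1 - TV(P_n^n, Q_n^n)) ≤ exp(-h) < 1. -/
open MeasureTheory Filter

/-- Total variation distance `TV(P, Q) = sup_A (P(A) - Q(A))`. -/
noncomputable def tvDist {Ω : Type*} [MeasurableSpace Ω] (P Q : Measure Ω) : ℝ :=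
  ⨆ A : {A : Set Ω // MeasurableSet A}, ((P A).toReal - (Q A).toReal)

/-- Squared Hellinger distance `H²(P,Q) = 1 - ∫ √(pq) dμ` with `μ = P + Q`. -/
noncomputable def hellingerSqM {Ω : Type*} [MeasurableSpace Ω] (P Q : Measure Ω) : ℝ :=
  1 - ∫ x, Real.sqrt ((P.rnDeriv (P + Q) x).toReal * (Q.rnDeriv (P + Q) x).toReal) ∂(P + Q)

section Aux

variable {Ω : Type*} [MeasurableSpace Ω]

/-- Affinity with respect to a general dominating measure. -/
noncomputable def affW (P Q ν : Measure Ω) : ℝ :=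
  ∫ x, Real.sqrt ((P.rnDeriv ν x).toReal * (Q.rnDeriv ν x).toReal) ∂ν

lemma hellingerSqM_eq (P Q : Measure Ω) : hellingerSqM P Q = 1 - affW P Q (P + Q) := rfl

lemma sqrt_finset_prod {ι : Type*} (s : Finset ι) (f : ι → ℝ) (hf : ∀ i, 0 ≤ f i) :
    Real.sqrt (∏ i ∈ s, f i) = ∏ i ∈ s, Real.sqrt (f i) := by
  induction s using Finset.cons_induction with
  | empty => simp
  | cons a s ha ih => rw [Finset.prod_cons, Finset.prod_cons, Real.sqrt_mul (hf a), ih]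

lemma lintegral_fin_prod (μ : Measure Ω) [SigmaFinite μ] :
    ∀ (n : ℕ) (f : Fin n → Ω → ENNReal), (∀ i, Measurable (f i)) →
      ∫⁻ x : Fin n → Ω, ∏ i, f i (x i) ∂(Measure.pi fun _ => μ) = ∏ i, ∫⁻ y, f i y ∂μ
  | 0, f, _ => by simp [Measure.pi_of_empty]
  | n+1, f, hf => by
    have hmp := (measurePreserving_piFinSuccAbove (fun _ : Fin (n+1) => μ) 0).symm
    have hF : Measurable fun x : Fin (n+1) → Ω => ∏ i, f i (x i) :=
      Finset.measurable_prod _ fun i _ => (hf i).comp (measurable_pi_apply i)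
    rw [← hmp.lintegral_comp hF]
    have heq : ∀ y : Ω × (Fin n → Ω),
        (∏ i, f i (((MeasurableEquiv.piFinSuccAbove (fun _ => Ω) 0).symm y) i)) =
        f 0 y.1 * ∏ i : Fin n, f i.succ (y.2 i) := by
      intro y
      simp only [MeasurableEquiv.piFinSuccAbove_symm_apply, Fin.insertNthEquiv,
        Fin.prod_univ_succ, Fin.insertNth_zero, Equiv.coe_fn_mk, Fin.cons_succ,
        Fin.zero_succAbove, Fin.cons_zero, cast_eq]
    simp_rw [heq]
    rw [lintegral_prod_mul (f := f 0) (g := fun z : Fin n → Ω => ∏ i, f i.succ (z i))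
      (hf 0).aemeasurable
      (Finset.measurable_prod _ fun i _ => (hf i.succ).comp (measurable_pi_apply i)).aemeasurable,
      lintegral_fin_prod μ n (fun i => f i.succ) (fun i => hf i.succ), Fin.prod_univ_succ]


lemma pi_withDensity (n : ℕ) (μ P : Measure Ω) [IsFiniteMeasure μ] [IsFiniteMeasure P]
    (hPμ : P ≪ μ) :
    Measure.pi (fun _ : Fin n => P) =
      (Measure.pi fun _ : Fin n => μ).withDensity (fun x => ∏ i, P.rnDeriv μ (x i)) := by
  have hm : Measurable (P.rnDeriv μ) := Measure.measurable_rnDeriv _ _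
  refine Measure.pi_eq (μ := fun _ : Fin n => P) fun s hs => ?_
  rw [withDensity_apply _ (MeasurableSet.univ_pi hs), ← lintegral_indicator
    (MeasurableSet.univ_pi hs) (fun x => ∏ i, P.rnDeriv μ (x i))]
  have hind : ∀ x : Fin n → Ω, (Set.pi Set.univ s).indicator
      (fun x => ∏ i, P.rnDeriv μ (x i)) x = ∏ i, (s i).indicator (P.rnDeriv μ) (x i) := by
    intro x
    by_cases hx : x ∈ Set.pi Set.univ s
    · rw [Set.indicator_of_mem hx]
      refine Finset.prod_congr rfl fun i _ => ?_
      rw [Set.indicator_of_mem (hx i (Set.mem_univ i))]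
    · rw [Set.indicator_of_notMem hx]
      rw [Set.mem_univ_pi] at hx
      push_neg at hx
      obtain ⟨i, hi⟩ := hx
      exact (Finset.prod_eq_zero (Finset.mem_univ i)
        (by rw [Set.indicator_of_notMem hi])).symm
  simp_rw [hind]
  rw [lintegral_fin_prod μ n (fun i => (s i).indicator (P.rnDeriv μ))
    (fun i => hm.indicator (hs i))]
  refine Finset.prod_congr rfl fun i _ => ?_
  rw [lintegral_indicator (hs i), Measure.setLIntegral_rnDeriv hPμ]

lemma rnDeriv_pi_ae (n : ℕ) (μ P : Measure Ω) [IsFiniteMeasure μ] [IsFiniteMeasure P]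
    (hPμ : P ≪ μ) :
    (Measure.pi fun _ : Fin n => P).rnDeriv (Measure.pi fun _ => μ)
      =ᵐ[Measure.pi fun _ : Fin n => μ] fun x => ∏ i, P.rnDeriv μ (x i) := by
  rw [pi_withDensity n μ P hPμ]
  exact Measure.rnDeriv_withDensity _
    (Finset.measurable_prod _ fun i _ => (Measure.measurable_rnDeriv _ _).comp
      (measurable_pi_apply i))

lemma pi_ac (n : ℕ) (μ P : Measure Ω) [IsFiniteMeasure μ] [IsFiniteMeasure P] (hPμ : P ≪ μ) :
    (Measure.pi fun _ : Fin n => P) ≪ (Measure.pi fun _ : Fin n => μ) := by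
  rw [pi_withDensity n μ P hPμ]
  exact withDensity_absolutelyContinuous _ _

lemma affW_eq (P Q ν : Measure Ω) [IsFiniteMeasure P] [IsFiniteMeasure Q] [SigmaFinite ν]
    (hP : P ≪ ν) (hQ : Q ≪ ν) : affW P Q ν = affW P Q (P + Q) := by
  have hμν : P + Q ≪ ν := Measure.AbsolutelyContinuous.add_left hP hQ
  have hPμ : P ≪ P + Q := Measure.absolutelyContinuous_of_le (Measure.le_add_right le_rfl)
  have hQμ : Q ≪ P + Q := Measure.absolutelyContinuous_of_le (Measure.le_add_left le_rfl)
  calc affW P Q ν = ∫ x, ((P + Q).rnDeriv ν x).toReal •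
      Real.sqrt ((P.rnDeriv (P + Q) x).toReal * (Q.rnDeriv (P + Q) x).toReal) ∂ν := by
        refine integral_congr_ae ?_
        filter_upwards [Measure.rnDeriv_mul_rnDeriv hPμ (κ := ν),
          Measure.rnDeriv_mul_rnDeriv hQμ (κ := ν)] with x hx1 hx2
        rw [← hx1, ← hx2]
        simp only [Pi.mul_apply, ENNReal.toReal_mul, smul_eq_mul]
        set a := (P.rnDeriv (P + Q) x).toReal
        set b := (Q.rnDeriv (P + Q) x).toReal
        set c := ((P + Q).rnDeriv ν x).toReal
        have h1 : a * c * (b * c) = a * b * c ^ 2 := by ring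
        rw [h1, Real.sqrt_mul (by positivity), Real.sqrt_sq ENNReal.toReal_nonneg, mul_comm]
    _ = affW P Q (P + Q) := MeasureTheory.integral_rnDeriv_smul hμν


lemma affW_pi (n : ℕ) (P Q : Measure Ω) [IsProbabilityMeasure P] [IsProbabilityMeasure Q] :
    affW (Measure.pi fun _ : Fin n => P) (Measure.pi fun _ : Fin n => Q)
        ((Measure.pi fun _ : Fin n => P) + (Measure.pi fun _ : Fin n => Q))
      = (affW P Q (P + Q)) ^ n := by
  set μ := P + Q with hμdef
  have hPμ : P ≪ μ := Measure.absolutelyContinuous_of_le (Measure.le_add_right le_rfl)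
  have hQμ : Q ≪ μ := Measure.absolutelyContinuous_of_le (Measure.le_add_left le_rfl)
  haveI : IsFiniteMeasure μ := by rw [hμdef]; infer_instance
  have hPac := pi_ac n μ P hPμ
  have hQac := pi_ac n μ Q hQμ
  rw [← affW_eq _ _ (Measure.pi fun _ : Fin n => μ) hPac hQac]
  have h1 := rnDeriv_pi_ae n μ P hPμ
  have h2 := rnDeriv_pi_ae n μ Q hQμ
  calc affW (Measure.pi fun _ : Fin n => P) (Measure.pi fun _ : Fin n => Q)
        (Measure.pi fun _ : Fin n => μ)
      = ∫ x : Fin n → Ω, ∏ i,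
          Real.sqrt ((P.rnDeriv μ (x i)).toReal * (Q.rnDeriv μ (x i)).toReal)
          ∂(Measure.pi fun _ : Fin n => μ) := by
        refine integral_congr_ae ?_
        filter_upwards [h1, h2] with x hx1 hx2
        rw [hx1, hx2, ENNReal.toReal_prod, ENNReal.toReal_prod, ← Finset.prod_mul_distrib,
          sqrt_finset_prod _ _ (fun i => by positivity)]
    _ = (affW P Q μ) ^ n := by
        letI : MeasureSpace Ω := ⟨μ⟩
        haveI : SigmaFinite (volume : Measure Ω) := inferInstanceAs (SigmaFinite μ)
        have hvol : (Measure.pi fun _ : Fin n => μ) = (volume : Measure (Fin n → Ω)) :=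
          MeasureTheory.volume_pi.symm
        rw [hvol]
        have := MeasureTheory.integral_fintype_prod_eq_pow (𝕜 := ℝ) (ι := Fin n) (μ := (volume : Measure Ω))
          (fun y => Real.sqrt ((P.rnDeriv μ y).toReal * (Q.rnDeriv μ y).toReal))
        rw [Fintype.card_fin] at this
        exact this


lemma tv_bddAbove (P Q : Measure Ω) [IsProbabilityMeasure P] [IsProbabilityMeasure Q] :
    BddAbove (Set.range fun A : {A : Set Ω // MeasurableSet A} =>
      ((P ↑A).toReal - (Q ↑A).toReal)) := by
  refine ⟨1, fun y hy => ?_⟩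
  obtain ⟨A, rfl⟩ := hy
  have h1 : (P ↑A).toReal ≤ 1 := by
    rw [← ENNReal.toReal_one]
    exact ENNReal.toReal_mono ENNReal.one_ne_top prob_le_one
  have h2 : (0:ℝ) ≤ (Q ↑A).toReal := ENNReal.toReal_nonneg
  simp only []
  linarith

lemma tv_le_one (P Q : Measure Ω) [IsProbabilityMeasure P] [IsProbabilityMeasure Q] :
    tvDist P Q ≤ 1 := by
  refine ciSup_le fun A => ?_
  have h1 : (P ↑A).toReal ≤ 1 := by
    rw [← ENNReal.toReal_one]
    exact ENNReal.toReal_mono ENNReal.one_ne_top prob_le_one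
  have h2 : (0:ℝ) ≤ (Q ↑A).toReal := ENNReal.toReal_nonneg
  linarith

lemma tv_nonneg (P Q : Measure Ω) [IsProbabilityMeasure P] [IsProbabilityMeasure Q] :
    0 ≤ tvDist P Q := by
  refine le_ciSup_of_le (tv_bddAbove P Q) ⟨∅, MeasurableSet.empty⟩ ?_
  simp

lemma tv_bounds (P Q : Measure Ω) [IsProbabilityMeasure P] [IsProbabilityMeasure Q] :
    1 - tvDist P Q ≤ affW P Q (P + Q) ∧
      tvDist P Q ≤ Real.sqrt (1 - affW P Q (P + Q) ^ 2) := by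
  set μ := P + Q with hμdef
  haveI : IsFiniteMeasure μ := by rw [hμdef]; infer_instance
  have hPμ : P ≪ μ := Measure.absolutelyContinuous_of_le (Measure.le_add_right le_rfl)
  have hQμ : Q ≪ μ := Measure.absolutelyContinuous_of_le (Measure.le_add_left le_rfl)
  set p : Ω → ℝ := fun x => (P.rnDeriv μ x).toReal with hpdef
  set q : Ω → ℝ := fun x => (Q.rnDeriv μ x).toReal with hqdef
  have hpm : Measurable p := (Measure.measurable_rnDeriv _ _).ennreal_toReal
  have hqm : Measurable q := (Measure.measurable_rnDeriv _ _).ennreal_toReal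
  have hp0 : ∀ x, 0 ≤ p x := fun x => ENNReal.toReal_nonneg
  have hq0 : ∀ x, 0 ≤ q x := fun x => ENNReal.toReal_nonneg
  have hsum : ∀ᵐ x ∂μ, p x + q x = 1 := by
    filter_upwards [Measure.rnDeriv_add' P Q μ, Measure.rnDeriv_self μ,
      Measure.rnDeriv_lt_top P μ, Measure.rnDeriv_lt_top Q μ] with x h1 h2 h3 h4
    have hx : P.rnDeriv μ x + Q.rnDeriv μ x = 1 := by
      rw [← Pi.add_apply (P.rnDeriv μ) (Q.rnDeriv μ), ← h1]
      exact h2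
    calc p x + q x = ((P.rnDeriv μ x) + (Q.rnDeriv μ x)).toReal :=
          (ENNReal.toReal_add h3.ne h4.ne).symm
      _ = 1 := by rw [hx]; simp
  have hple : ∀ᵐ x ∂μ, p x ≤ 1 := by
    filter_upwards [hsum] with x hx; nlinarith [hq0 x]
  have hqle : ∀ᵐ x ∂μ, q x ≤ 1 := by
    filter_upwards [hsum] with x hx; nlinarith [hp0 x]
  have hbint : ∀ (f : Ω → ℝ), Measurable f → (∀ᵐ x ∂μ, |f x| ≤ 2) → Integrable f μ := by
    intro f hf hb
    exact Integrable.mono' (integrable_const 2) hf.aestronglyMeasurable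
      (by filter_upwards [hb] with x hx; simpa using hx)
  have hintp : Integrable p μ := by
    refine hbint p hpm ?_
    filter_upwards [hple] with x hx
    rw [abs_of_nonneg (hp0 x)]; linarith
  have hintq : Integrable q μ := by
    refine hbint q hqm ?_
    filter_upwards [hqle] with x hx
    rw [abs_of_nonneg (hq0 x)]; linarith
  have hintmin : Integrable (fun x => min (p x) (q x)) μ := by
    refine hbint _ (hpm.min hqm) ?_
    filter_upwards [hple] with x hx
    rw [abs_of_nonneg (le_min (hp0 x) (hq0 x))]
    calc min (p x) (q x) ≤ p x := min_le_left _ _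
      _ ≤ 2 := by linarith
  have hsqm : Measurable (fun x => Real.sqrt (p x * q x)) :=
    Real.continuous_sqrt.measurable.comp (hpm.mul hqm)
  have hintsq : Integrable (fun x => Real.sqrt (p x * q x)) μ := by
    refine hbint _ hsqm ?_
    filter_upwards [hple, hqle] with x hx1 hx2
    rw [abs_of_nonneg (Real.sqrt_nonneg _)]
    calc Real.sqrt (p x * q x) ≤ Real.sqrt 1 :=
          Real.sqrt_le_sqrt (by nlinarith [hp0 x, hq0 x])
      _ ≤ 2 := by rw [Real.sqrt_one]; norm_num
  have hip : ∫ x, p x ∂μ = 1 := by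
    refine (Measure.integral_toReal_rnDeriv hPμ).trans ?_
    simp
  have hiq : ∫ x, q x ∂μ = 1 := by
    refine (Measure.integral_toReal_rnDeriv hQμ).trans ?_
    simp
  set a := ∫ x, Real.sqrt (p x * q x) ∂μ with hadef
  have haff : affW P Q μ = a := rfl
  have ha0 : 0 ≤ a := integral_nonneg fun x => Real.sqrt_nonneg _
  rw [haff]
  -- Part 1
  have hAm : MeasurableSet {x | q x ≤ p x} := measurableSet_le hqm hpm
  have key1 : (P {x | q x ≤ p x}).toReal - (Q {x | q x ≤ p x}).toReal
      = 1 - ∫ x, min (p x) (q x) ∂μ := by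
    rw [← measureReal_def, ← measureReal_def, ← Measure.setIntegral_toReal_rnDeriv hPμ _, ← Measure.setIntegral_toReal_rnDeriv hQμ _,
      ← integral_sub hintp.integrableOn hintq.integrableOn, ← integral_indicator hAm]
    have hind : ∀ x, Set.indicator {x | q x ≤ p x} (fun x => p x - q x) x
        = p x - min (p x) (q x) := by
      intro x
      by_cases hx : x ∈ {x | q x ≤ p x}
      · rw [Set.indicator_of_mem hx, min_eq_right hx]
      · rw [Set.indicator_of_notMem hx, min_eq_left (le_of_not_ge hx), sub_self]
    rw [integral_congr_ae (Filter.Eventually.of_forall hind),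
      integral_sub hintp hintmin, hip]
  have hpart1 : 1 - tvDist P Q ≤ a := by
    have hle : (P {x | q x ≤ p x}).toReal - (Q {x | q x ≤ p x}).toReal ≤ tvDist P Q :=
      le_ciSup (tv_bddAbove P Q) (⟨{x | q x ≤ p x}, hAm⟩ : {A : Set Ω // MeasurableSet A})
    have hmina : ∫ x, min (p x) (q x) ∂μ ≤ a := by
      rw [hadef]
      refine integral_mono hintmin hintsq fun x => ?_
      rcases le_total (p x) (q x) with h | h
      · rw [min_eq_left h]
        calc p x = Real.sqrt (p x * p x) := (Real.sqrt_mul_self (hp0 x)).symm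
          _ ≤ Real.sqrt (p x * q x) := Real.sqrt_le_sqrt (by nlinarith [hp0 x])
      · rw [min_eq_right h]
        calc q x = Real.sqrt (q x * q x) := (Real.sqrt_mul_self (hq0 x)).symm
          _ ≤ Real.sqrt (p x * q x) := Real.sqrt_le_sqrt (by nlinarith [hq0 x])
    rw [key1] at hle
    linarith
  refine ⟨hpart1, ?_⟩
  -- Part 2
  have hpq0 : ∫ x, (p x - q x) ∂μ = 0 := by
    rw [integral_sub hintp hintq, hip, hiq, sub_self]
  have habs : Integrable (fun x => |p x - q x|) μ := (hintp.sub hintq).abs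
  set F : Ω → ℝ := fun x => |Real.sqrt (p x) - Real.sqrt (q x)| with hFdef
  set G : Ω → ℝ := fun x => Real.sqrt (p x) + Real.sqrt (q x) with hGdef
  have hFm : Measurable F :=
    ((Real.continuous_sqrt.measurable.comp hpm).sub
      (Real.continuous_sqrt.measurable.comp hqm)).abs
  have hGm : Measurable G :=
    (Real.continuous_sqrt.measurable.comp hpm).add (Real.continuous_sqrt.measurable.comp hqm)
  have hF0 : ∀ x, 0 ≤ F x := fun x => abs_nonneg _
  have hG0 : ∀ x, 0 ≤ G x := fun x => add_nonneg (Real.sqrt_nonneg _) (Real.sqrt_nonneg _)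
  have hsqrt_le : ∀ᵐ x ∂μ, Real.sqrt (p x) ≤ 1 ∧ Real.sqrt (q x) ≤ 1 := by
    filter_upwards [hple, hqle] with x h1 h2
    exact ⟨Real.sqrt_le_one.mpr h1, Real.sqrt_le_one.mpr h2⟩
  have hmemF : MemLp F (ENNReal.ofReal 2) μ := by
    refine MemLp.of_bound hFm.aestronglyMeasurable 2 ?_
    filter_upwards [hsqrt_le] with x ⟨h1, h2⟩
    rw [Real.norm_eq_abs, abs_abs, abs_sub_comm]
    have := Real.sqrt_nonneg (p x); have := Real.sqrt_nonneg (q x)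
    rw [abs_sub_le_iff]; constructor <;> linarith
  have hmemG : MemLp G (ENNReal.ofReal 2) μ := by
    refine MemLp.of_bound hGm.aestronglyMeasurable 2 ?_
    filter_upwards [hsqrt_le] with x hx
    rw [Real.norm_eq_abs, abs_of_nonneg (hG0 x)]
    simp only [hGdef]
    linarith [hx.1, hx.2, Real.sqrt_nonneg (p x), Real.sqrt_nonneg (q x)]
  have hFG : ∀ x, F x * G x = |p x - q x| := by
    intro x
    simp only [hFdef, hGdef]
    have hGx : (0:ℝ) ≤ Real.sqrt (p x) + Real.sqrt (q x) :=
      add_nonneg (Real.sqrt_nonneg _) (Real.sqrt_nonneg _)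
    rw [← abs_of_nonneg hGx, ← abs_mul]
    congr 1
    have e1 := Real.sq_sqrt (hp0 x)
    have e2 := Real.sq_sqrt (hq0 x)
    linear_combination e1 - e2
  have hrpow2 : ∀ y : ℝ, y ^ (2:ℝ) = y ^ (2:ℕ) := by
    intro y
    rw [show (2:ℝ) = ((2:ℕ):ℝ) by norm_num, Real.rpow_natCast]
  have hSF : ∫ x, F x ^ (2:ℝ) ∂μ = 2 - 2 * a := by
    have hcongr : ∀ x, F x ^ (2:ℝ) = p x + q x - 2 * Real.sqrt (p x * q x) := by
      intro x
      rw [hrpow2]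
      simp only [hFdef]
      rw [sq_abs, Real.sqrt_mul (hp0 x)]
      have e1 := Real.sq_sqrt (hp0 x)
      have e2 := Real.sq_sqrt (hq0 x)
      linear_combination e1 + e2
    rw [integral_congr_ae (Filter.Eventually.of_forall hcongr),
      integral_sub (f := fun x => p x + q x) (g := fun x => 2 * Real.sqrt (p x * q x))
        (hintp.add hintq) (hintsq.const_mul 2),
      integral_add hintp hintq, integral_const_mul, hip, hiq, ← hadef]
    ring
  have hSG : ∫ x, G x ^ (2:ℝ) ∂μ = 2 + 2 * a := by
    have hcongr : ∀ x, G x ^ (2:ℝ) = p x + q x + 2 * Real.sqrt (p x * q x) := by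
      intro x
      rw [hrpow2]
      simp only [hGdef]
      rw [Real.sqrt_mul (hp0 x)]
      have e1 := Real.sq_sqrt (hp0 x)
      have e2 := Real.sq_sqrt (hq0 x)
      linear_combination e1 + e2
    rw [integral_congr_ae (Filter.Eventually.of_forall hcongr),
      integral_add (f := fun x => p x + q x) (g := fun x => 2 * Real.sqrt (p x * q x))
        (hintp.add hintq) (hintsq.const_mul 2),
      integral_add hintp hintq, integral_const_mul, hip, hiq, ← hadef]
    ring
  have hSF0 : 0 ≤ ∫ x, F x ^ (2:ℝ) ∂μ :=
    integral_nonneg fun x => Real.rpow_nonneg (hF0 x) _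
  have ha1 : a ≤ 1 := by rw [hSF] at hSF0; linarith
  have hCS := integral_mul_le_Lp_mul_Lq_of_nonneg
    (Real.HolderConjugate.two_two)
    (Filter.Eventually.of_forall hF0) (Filter.Eventually.of_forall hG0) hmemF hmemG
  rw [hSF, hSG, integral_congr_ae (Filter.Eventually.of_forall hFG)] at hCS
  have hsqrt4 : Real.sqrt 4 = 2 := by
    rw [show (4:ℝ) = 2^2 by norm_num, Real.sqrt_sq (by norm_num : (0:ℝ) ≤ 2)]
  have habs_le : ∫ x, |p x - q x| ∂μ ≤ 2 * Real.sqrt (1 - a^2) := by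
    calc ∫ x, |p x - q x| ∂μ ≤ (2 - 2*a) ^ ((1:ℝ)/2) * (2 + 2*a) ^ ((1:ℝ)/2) := by
          simpa using hCS
      _ = Real.sqrt ((2 - 2*a) * (2 + 2*a)) := by
          rw [← Real.sqrt_eq_rpow, ← Real.sqrt_eq_rpow,
            ← Real.sqrt_mul (by linarith : (0:ℝ) ≤ 2 - 2*a)]
      _ = 2 * Real.sqrt (1 - a^2) := by
          rw [show (2 - 2*a) * (2 + 2*a) = 4 * (1 - a^2) by ring,
            Real.sqrt_mul (by norm_num : (0:ℝ) ≤ 4), hsqrt4]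
  refine ciSup_le fun A => ?_
  obtain ⟨A, hA⟩ := A
  have e1 : (P A).toReal - (Q A).toReal = ∫ x in A, (p x - q x) ∂μ := by
    rw [← measureReal_def, ← measureReal_def, ← Measure.setIntegral_toReal_rnDeriv hPμ A, ← Measure.setIntegral_toReal_rnDeriv hQμ A,
      ← integral_sub hintp.integrableOn hintq.integrableOn]
  have e2 : ∫ x in A, (p x - q x) ∂μ + ∫ x in Aᶜ, (p x - q x) ∂μ = 0 := by
    rw [integral_add_compl (f := fun x => p x - q x) hA (hintp.sub hintq)]
    exact hpq0
  have e3 : ∫ x in A, (p x - q x) ∂μ ≤ ∫ x in A, |p x - q x| ∂μ :=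
    integral_mono (hintp.sub hintq).integrableOn habs.integrableOn fun x => le_abs_self _
  have e4 : -(∫ x in Aᶜ, (p x - q x) ∂μ) ≤ ∫ x in Aᶜ, |p x - q x| ∂μ := by
    rw [← integral_neg]
    exact integral_mono (hintp.sub hintq).integrableOn.neg habs.integrableOn
      fun x => neg_le_abs _
  have e5 : ∫ x in A, |p x - q x| ∂μ + ∫ x in Aᶜ, |p x - q x| ∂μ = ∫ x, |p x - q x| ∂μ :=
    integral_add_compl hA habs
  simp only []
  linarith


lemma pow_tendsto_exp (r : ℕ → ℝ) (h : ℝ)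
    (hconv : Tendsto (fun n : ℕ => (n : ℝ) * (1 - r n)) atTop (nhds h)) :
    Tendsto (fun n : ℕ => r n ^ n) atTop (nhds (Real.exp (-h))) := by
  have h1n : Tendsto (fun n : ℕ => 1 - r n) atTop (nhds 0) := by
    have hmul : Tendsto (fun n : ℕ => ((n : ℝ) * (1 - r n)) * (1 / (n : ℝ))) atTop
        (nhds (h * 0)) := hconv.mul tendsto_one_div_atTop_nhds_zero_nat
    rw [mul_zero] at hmul
    refine hmul.congr' ?_
    filter_upwards [eventually_ge_atTop 1] with n hn
    have hne : (n : ℝ) ≠ 0 := Nat.cast_ne_zero.mpr (by omega)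
    field_simp
  have hr1 : Tendsto r atTop (nhds 1) := by
    have h2 : Tendsto (fun n : ℕ => 1 - (1 - r n)) atTop (nhds (1 - 0)) :=
      tendsto_const_nhds.sub h1n
    simpa using h2
  have hpos : ∀ᶠ n : ℕ in atTop, 0 < r n :=
    hr1.eventually (eventually_gt_nhds (by norm_num : (0:ℝ) < 1))
  have hlowlim : Tendsto (fun n : ℕ => -((n : ℝ) * (1 - r n)) * (r n)⁻¹) atTop
      (nhds (-h)) := by
    have := hconv.neg.mul (hr1.inv₀ one_ne_zero)
    simpa using this
  have hL : Tendsto (fun n : ℕ => (n : ℝ) * Real.log (r n)) atTop (nhds (-h)) := by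
    refine tendsto_of_tendsto_of_tendsto_of_le_of_le' hlowlim hconv.neg ?_ ?_
    · filter_upwards [hpos] with n hn
      have hlog : 1 - (r n)⁻¹ ≤ Real.log (r n) := Real.one_sub_inv_le_log_of_pos hn
      have hn0 : (0:ℝ) ≤ (n : ℝ) := Nat.cast_nonneg n
      have := mul_le_mul_of_nonneg_left hlog hn0
      calc -((n : ℝ) * (1 - r n)) * (r n)⁻¹ = (n : ℝ) * (1 - (r n)⁻¹) := by
            field_simp
            ring
        _ ≤ (n : ℝ) * Real.log (r n) := this
    · filter_upwards [hpos] with n hn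
      have hlog : Real.log (r n) ≤ r n - 1 := Real.log_le_sub_one_of_pos hn
      have hn0 : (0:ℝ) ≤ (n : ℝ) := Nat.cast_nonneg n
      have := mul_le_mul_of_nonneg_left hlog hn0
      calc (n : ℝ) * Real.log (r n) ≤ (n : ℝ) * (r n - 1) := this
        _ = -((n : ℝ) * (1 - r n)) := by ring
  have hexp : Tendsto (fun n : ℕ => Real.exp ((n : ℝ) * Real.log (r n))) atTop
      (nhds (Real.exp (-h))) := (Real.continuous_exp.tendsto _).comp hL
  refine hexp.congr' ?_
  filter_upwards [hpos] with n hn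
  rw [Real.exp_nat_mul, Real.exp_log hn]

end Aux

/-- If `n · H²(P_n, Q_n) → h > 0`, then
`liminf (1 - TV(P_nⁿ, Q_nⁿ)) ≥ 1 - √(1 - e^{-2h}) > 0` and
`limsup (1 - TV(P_nⁿ, Q_nⁿ)) ≤ e^{-h} < 1`. -/


theorem tv_bounds_of_hellinger_rate {Ω : Type*} [MeasurableSpace Ω]
    (P Q : ℕ → Measure Ω)
    (hP : ∀ n, IsProbabilityMeasure (P n)) (hQ : ∀ n, IsProbabilityMeasure (Q n))
    (h : ℝ) (hpos : 0 < h)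
    (hconv : Tendsto (fun n : ℕ => (n : ℝ) * hellingerSqM (P n) (Q n)) atTop (nhds h)) :
    (1 - Real.sqrt (1 - Real.exp (-2 * h)) ≤
        liminf (fun n : ℕ =>
          1 - tvDist (Measure.pi fun _ : Fin n => P n) (Measure.pi fun _ : Fin n => Q n)) atTop)
    ∧ 0 < 1 - Real.sqrt (1 - Real.exp (-2 * h))
    ∧ (limsup (fun n : ℕ =>
          1 - tvDist (Measure.pi fun _ : Fin n => P n) (Measure.pi fun _ : Fin n => Q n)) atTop
        ≤ Real.exp (-h))
    ∧ Real.exp (-h) < 1 := by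
  haveI := hP; haveI := hQ
  set r : ℕ → ℝ := fun n => affW (P n) (Q n) (P n + Q n) with hrdef
  set u : ℕ → ℝ := fun n =>
    1 - tvDist (Measure.pi fun _ : Fin n => P n) (Measure.pi fun _ : Fin n => Q n) with hudef
  have hconv' : Tendsto (fun n : ℕ => (n : ℝ) * (1 - r n)) atTop (nhds h) := by
    refine hconv.congr fun n => ?_
    rw [hellingerSqM_eq]
  have hrn : Tendsto (fun n : ℕ => r n ^ n) atTop (nhds (Real.exp (-h))) :=
    pow_tendsto_exp r h hconv'
  -- per-n inequalities
  have hbounds : ∀ n : ℕ, 1 - r n ^ n ≤ tvDist (Measure.pi fun _ : Fin n => P n)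
      (Measure.pi fun _ : Fin n => Q n) ∧ tvDist (Measure.pi fun _ : Fin n => P n)
      (Measure.pi fun _ : Fin n => Q n) ≤ Real.sqrt (1 - (r n ^ n) ^ 2) := by
    intro n
    haveI := hP n; haveI := hQ n
    have hb := tv_bounds (Measure.pi fun _ : Fin n => P n) (Measure.pi fun _ : Fin n => Q n)
    rw [affW_pi n (P n) (Q n)] at hb
    exact ⟨by linarith [hb.1], hb.2⟩
  have hu01 : ∀ n : ℕ, 0 ≤ u n ∧ u n ≤ 1 := by
    intro n
    haveI := hP n; haveI := hQ n
    constructor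
    · have := tv_le_one (Measure.pi fun _ : Fin n => P n) (Measure.pi fun _ : Fin n => Q n)
      simp only [hudef]
      linarith
    · have := tv_nonneg (Measure.pi fun _ : Fin n => P n) (Measure.pi fun _ : Fin n => Q n)
      simp only [hudef]
      linarith
  have hexp2 : Real.exp (-h) ^ 2 = Real.exp (-2 * h) := by
    rw [sq, ← Real.exp_add]
    ring_nf
  have hexp_lt : Real.exp (-h) < 1 := Real.exp_lt_one_iff.mpr (by linarith)
  have hc_pos : 0 < 1 - Real.sqrt (1 - Real.exp (-2 * h)) := by
    have hlt : Real.sqrt (1 - Real.exp (-2 * h)) < 1 := by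
      refine (Real.sqrt_lt' one_pos).mpr ?_
      nlinarith [Real.exp_pos (-2 * h)]
    linarith
  -- limsup part
  have hlimsup : limsup u atTop ≤ Real.exp (-h) := by
    have hle : u ≤ᶠ[atTop] fun n => r n ^ n := by
      refine Filter.Eventually.of_forall fun n => ?_
      have := (hbounds n).1
      simp only [hudef]
      linarith
    have hcb : IsCoboundedUnder (· ≤ ·) atTop u :=
      Filter.IsBoundedUnder.isCoboundedUnder_le
        (Filter.isBoundedUnder_of ⟨0, fun n => (hu01 n).1⟩)
    have hbd : IsBoundedUnder (· ≤ ·) atTop (fun n => r n ^ n) := hrn.isBoundedUnder_le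
    calc limsup u atTop ≤ limsup (fun n => r n ^ n) atTop := limsup_le_limsup hle hcb hbd
      _ = Real.exp (-h) := hrn.limsup_eq
  -- liminf part
  have hw : Tendsto (fun n : ℕ => 1 - Real.sqrt (1 - (r n ^ n) ^ 2)) atTop
      (nhds (1 - Real.sqrt (1 - Real.exp (-2 * h)))) := by
    have h2 : Tendsto (fun n : ℕ => (r n ^ n) ^ 2) atTop (nhds (Real.exp (-h) ^ 2)) :=
      hrn.pow 2
    rw [hexp2] at h2
    have h3 : Tendsto (fun n : ℕ => 1 - (r n ^ n) ^ 2) atTop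
        (nhds (1 - Real.exp (-2 * h))) := tendsto_const_nhds.sub h2
    have h4 := (Real.continuous_sqrt.tendsto _).comp h3
    exact tendsto_const_nhds.sub h4
  have hliminf : 1 - Real.sqrt (1 - Real.exp (-2 * h)) ≤ liminf u atTop := by
    have hle : (fun n : ℕ => 1 - Real.sqrt (1 - (r n ^ n) ^ 2)) ≤ᶠ[atTop] u := by
      refine Filter.Eventually.of_forall fun n => ?_
      have := (hbounds n).2
      simp only [hudef]
      linarith
    have hbd : IsBoundedUnder (· ≥ ·) atTop
        (fun n : ℕ => 1 - Real.sqrt (1 - (r n ^ n) ^ 2)) := hw.isBoundedUnder_ge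
    have hcb : IsCoboundedUnder (· ≥ ·) atTop u :=
      Filter.IsBoundedUnder.isCoboundedUnder_ge
        (Filter.isBoundedUnder_of ⟨1, fun n => (hu01 n).2⟩)
    calc 1 - Real.sqrt (1 - Real.exp (-2 * h))
        = liminf (fun n : ℕ => 1 - Real.sqrt (1 - (r n ^ n) ^ 2)) atTop := hw.liminf_eq.symm
      _ ≤ liminf u atTop := liminf_le_liminf hle hbd hcb
  exact ⟨hliminf, hc_pos, hlimsup, hexp_lt⟩
end

section
/- The envelope distribution of the family {N(δ², (2δ)²) : δ ∈ ℝ} is the equal-probability mixture of the distribution of -χ²₁ (negative of a chi-squared with one degree of freedom) and a point mass at zero; that is, its CDF is Ḡ(x) = (1/2)(1 - F_{χ²₁}(-x)) for x < 0 and Ḡ(x) = 1 for x ≥ 0, where after redefining at the discontinuity x = 0 via right limits one has Ḡ(0⁻) = 1/2. -/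
open MeasureTheory ProbabilityTheory

/-- CDF of `δ² + 2δZ` for `Z ∼ N(0,1)`. -/
noncomputable def shiftedCDF (δ x : ℝ) : ℝ :=
  (gaussianReal 0 1 {z : ℝ | δ ^ 2 + 2 * δ * z ≤ x}).toReal

/-- CDF of `χ²₁`, the square of a standard normal. -/
noncomputable def chiSq1CDF (t : ℝ) : ℝ := (gaussianReal 0 1 {z : ℝ | z ^ 2 ≤ t}).toReal

section EnvelopeAux

open Set Filter Topology

instance noAtomsGaussianReal01 : NullSingletonClass (gaussianReal (0:ℝ) 1) := by
  constructor
  intro a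
  exact gaussianReal_absolutelyContinuous 0 one_ne_zero (Real.volume_singleton)

lemma gauss_neg_apply (s : Set ℝ) (hs : MeasurableSet s) :
    gaussianReal 0 1 ((fun z : ℝ => -z) ⁻¹' s) = gaussianReal 0 1 s := by
  have h := gaussianReal_map_const_mul (μ := (0:ℝ)) (v := 1) (-1)
  have h3 : (⟨(-1:ℝ)^2, sq_nonneg _⟩ : NNReal) * 1 = 1 := by ext; norm_num
  replace h : Measure.map (fun x : ℝ => -1 * x) (gaussianReal 0 1) = gaussianReal 0 1 := by
    rw [h]; congr 1
    · simp
  calc gaussianReal 0 1 ((fun z : ℝ => -z) ⁻¹' s)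
      = ((gaussianReal 0 1).map (fun z : ℝ => (-1) * z)) s := by
        rw [Measure.map_apply (by fun_prop) hs]
        congr 1
        ext z; simp
    _ = gaussianReal 0 1 s := by rw [h]

lemma gauss_Ici (a : ℝ) : gaussianReal 0 1 (Ici a) = gaussianReal 0 1 (Iic (-a)) := by
  have := gauss_neg_apply (Iic (-a)) measurableSet_Iic
  rw [← this]
  congr 1
  ext z; simp

lemma shiftedCDF_le_one (δ x : ℝ) : shiftedCDF δ x ≤ 1 := by
  unfold shiftedCDF
  have h1 : gaussianReal 0 1 {z : ℝ | δ ^ 2 + 2 * δ * z ≤ x} ≤ 1 := prob_le_one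
  calc (gaussianReal 0 1 {z : ℝ | δ ^ 2 + 2 * δ * z ≤ x}).toReal
      ≤ (1 : ENNReal).toReal := ENNReal.toReal_mono ENNReal.one_ne_top h1
    _ = 1 := by simp

lemma shifted_le (x : ℝ) (hx : x < 0) (δ : ℝ) :
    shiftedCDF δ x ≤ (gaussianReal 0 1 (Iic (-Real.sqrt (-x)))).toReal := by
  set s := Real.sqrt (-x) with hs_def
  have hs : 0 < s := Real.sqrt_pos.mpr (by linarith)
  have hs2 : s ^ 2 = -x := Real.sq_sqrt (by linarith)
  unfold shiftedCDF
  rcases lt_trichotomy δ 0 with hδ | hδ | hδ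
  · have hset : {z : ℝ | δ ^ 2 + 2 * δ * z ≤ x} = Ici ((x - δ ^ 2) / (2 * δ)) := by
      ext z
      rw [mem_setOf_eq, mem_Ici, div_le_iff_of_neg (by linarith)]
      constructor <;> intro h <;> nlinarith
    rw [hset, gauss_Ici]
    have hle : -((x - δ ^ 2) / (2 * δ)) ≤ -s := by
      rw [neg_div' (2*δ) (x - δ^2), div_le_iff_of_neg (by linarith)]
      nlinarith [sq_nonneg (δ + s)]
    exact ENNReal.toReal_mono (measure_ne_top _ _)
      (measure_mono (Iic_subset_Iic.mpr hle))
  · have hset : {z : ℝ | δ ^ 2 + 2 * δ * z ≤ x} = (∅ : Set ℝ) := by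
      ext z
      simp only [hδ, mem_setOf_eq, mem_empty_iff_false, iff_false, not_le]
      nlinarith
    rw [hset]
    simp [ENNReal.toReal_nonneg]
  · have hset : {z : ℝ | δ ^ 2 + 2 * δ * z ≤ x} = Iic ((x - δ ^ 2) / (2 * δ)) := by
      ext z
      rw [mem_setOf_eq, mem_Iic, le_div_iff₀ (by linarith)]
      constructor <;> intro h <;> nlinarith
    rw [hset]
    have hle : (x - δ ^ 2) / (2 * δ) ≤ -s := by
      rw [div_le_iff₀ (by linarith)]
      nlinarith [sq_nonneg (δ - s)]
    exact ENNReal.toReal_mono (measure_ne_top _ _)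
      (measure_mono (Iic_subset_Iic.mpr hle))

lemma shifted_eq (x : ℝ) (hx : x < 0) :
    shiftedCDF (Real.sqrt (-x)) x = (gaussianReal 0 1 (Iic (-Real.sqrt (-x)))).toReal := by
  set s := Real.sqrt (-x) with hs_def
  have hs : 0 < s := Real.sqrt_pos.mpr (by linarith)
  have hs2 : s ^ 2 = -x := Real.sq_sqrt (by linarith)
  unfold shiftedCDF
  have hset : {z : ℝ | s ^ 2 + 2 * s * z ≤ x} = Iic (-s) := by
    ext z
    rw [mem_setOf_eq, mem_Iic]
    constructor <;> intro h <;> nlinarith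
  rw [hset]

lemma key_sup (x : ℝ) (hx : x < 0) :
    (⨆ δ : ℝ, shiftedCDF δ x) = (gaussianReal 0 1 (Iic (-Real.sqrt (-x)))).toReal := by
  have hbdd : BddAbove (Set.range fun δ => shiftedCDF δ x) := by
    refine ⟨1, ?_⟩
    rintro _ ⟨δ, rfl⟩
    exact shiftedCDF_le_one δ x
  refine le_antisymm (ciSup_le (shifted_le x hx)) ?_
  calc (gaussianReal 0 1 (Iic (-Real.sqrt (-x)))).toReal
      = shiftedCDF (Real.sqrt (-x)) x := (shifted_eq x hx).symm
    _ ≤ ⨆ δ : ℝ, shiftedCDF δ x := le_ciSup hbdd _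

lemma gauss_partition {s : ℝ} (hs : 0 ≤ s) :
    (gaussianReal 0 1 (Iic (-s))).toReal
      = 1/2 * (1 - (gaussianReal 0 1 (Icc (-s) s)).toReal) := by
  set μ := gaussianReal (0:ℝ) 1 with hμ
  have h1 : μ (Iic (-s)) + μ (Ioi (-s)) = 1 := by
    have := measure_add_measure_compl (μ := μ) (measurableSet_Iic (a := -s))
    rwa [compl_Iic, measure_univ] at this
  have h2 : μ (Ioi (-s)) = μ (Ioc (-s) s) + μ (Ioi s) := by
    rw [← Set.Ioc_union_Ioi_eq_Ioi (by linarith : -s ≤ s),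
      measure_union (Set.Ioc_disjoint_Ioi le_rfl) measurableSet_Ioi]
  have h4 : μ (Ioi s) = μ (Iic (-s)) := by
    rw [measure_congr (Ioi_ae_eq_Ici (a := s)), gauss_Ici]
  have h5 : μ (Ioc (-s) s) = μ (Icc (-s) s) := measure_congr Ioc_ae_eq_Icc
  rw [h2, h4, h5] at h1
  have := congrArg ENNReal.toReal h1
  rw [ENNReal.toReal_add (measure_ne_top _ _)
      (ENNReal.add_ne_top.mpr ⟨measure_ne_top _ _, measure_ne_top _ _⟩),
    ENNReal.toReal_add (measure_ne_top _ _) (measure_ne_top _ _),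
    ENNReal.toReal_one] at this
  linarith

lemma gauss_half : (gaussianReal 0 1 (Iic (0:ℝ))).toReal = 1/2 := by
  have h := gauss_partition (le_refl (0:ℝ))
  rw [neg_zero, Icc_self] at h
  rw [h, measure_singleton]
  norm_num

lemma gaussF_mono : Monotone (fun a : ℝ => (gaussianReal 0 1 (Iic a)).toReal) :=
  fun _ _ hab => ENNReal.toReal_mono (measure_ne_top _ _)
    (measure_mono (Iic_subset_Iic.mpr hab))

lemma gaussF_tendsto : Tendsto (fun a : ℝ => (gaussianReal 0 1 (Iic a)).toReal)
    (nhdsWithin 0 (Set.Iio 0)) (nhds (1/2)) := by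
  set F := fun a : ℝ => (gaussianReal 0 1 (Iic a)).toReal with hF
  have hupper : ∀ y ∈ F '' Iio (0:ℝ), y ≤ 1/2 := by
    rintro _ ⟨a, ha, rfl⟩
    calc F a ≤ F 0 := gaussF_mono (le_of_lt ha)
      _ = 1/2 := gauss_half
  have hbdd : BddAbove (F '' Iio (0:ℝ)) := ⟨1/2, hupper⟩
  have hkey : sSup (F '' Iio (0:ℝ)) = 1/2 := by
    refine le_antisymm (csSup_le ⟨F (-1), ⟨-1, by norm_num, rfl⟩⟩ hupper) ?_
    have hmono : Monotone (fun n : ℕ => Iic (-(1/(n+1)) : ℝ)) := by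
      intro n m hnm
      apply Iic_subset_Iic.mpr
      have h1 : (0:ℝ) < n + 1 := by positivity
      have h2 : (n:ℝ) + 1 ≤ (m:ℝ) + 1 := by exact_mod_cast by omega
      have := one_div_le_one_div_of_le h1 h2
      linarith
    have huni : (⋃ n : ℕ, Iic (-(1/(n+1)) : ℝ)) = Iio 0 := by
      ext y
      simp only [mem_iUnion, mem_Iic, mem_Iio]
      constructor
      · rintro ⟨n, hn⟩
        have : (0:ℝ) < 1/(n+1) := by positivity
        linarith
      · intro hy
        obtain ⟨n, hn⟩ := exists_nat_one_div_lt (show (0:ℝ) < -y by linarith)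
        exact ⟨n, by linarith⟩
    have htend := tendsto_measure_iUnion_atTop (μ := gaussianReal 0 1) hmono
    rw [huni] at htend
    have hIio : gaussianReal 0 1 (Iio (0:ℝ)) = gaussianReal 0 1 (Iic 0) :=
      measure_congr Iio_ae_eq_Iic
    have htoReal : Tendsto (fun n : ℕ => F (-(1/(n+1)))) atTop (nhds (1/2)) := by
      have := (ENNReal.tendsto_toReal (by rw [hIio]; exact measure_ne_top _ _)).comp htend
      simp only [Function.comp_def] at this ⊢
      convert this using 2
      rw [hIio, gauss_half]
    refine le_of_tendsto htoReal (Eventually.of_forall fun n => ?_)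
    apply le_csSup hbdd
    refine ⟨-(1/(n+1)), ?_, rfl⟩
    simp only [mem_Iio]
    have : (0:ℝ) < 1/(n+1) := by positivity
    linarith
  have := gaussF_mono.tendsto_nhdsLT 0
  rwa [hkey] at this

lemma chiSq_eq_Icc (x : ℝ) (hx : x < 0) :
    chiSq1CDF (-x) = (gaussianReal 0 1 (Icc (-Real.sqrt (-x)) (Real.sqrt (-x)))).toReal := by
  set s := Real.sqrt (-x) with hs_def
  have hs : 0 < s := Real.sqrt_pos.mpr (by linarith)
  have hs2 : s ^ 2 = -x := Real.sq_sqrt (by linarith)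
  unfold chiSq1CDF
  have hset : {z : ℝ | z ^ 2 ≤ -x} = Icc (-s) s := by
    ext z
    rw [mem_setOf_eq, mem_Icc]
    constructor
    · intro h
      constructor <;> nlinarith
    · rintro ⟨h1, h2⟩
      nlinarith
  rw [hset]

end EnvelopeAux

/-- The envelope of `{N(δ², (2δ)²) : δ ∈ ℝ}` is the equal-probability mixture of
`-χ²₁` and a point mass at `0`: its CDF is `Ḡ(x) = (1/2)(1 - F_{χ²₁}(-x))` for
`x < 0`, `Ḡ(x) = 1` for `x ≥ 0`, and the left limit at `0` is `1/2`. -/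
theorem envelope_weak_weak_mixture :
    (∀ x : ℝ, x < 0 →
      (⨆ δ : ℝ, shiftedCDF δ x) = (1 / 2) * (1 - chiSq1CDF (-x)))
    ∧ (∀ x : ℝ, 0 ≤ x → (⨆ δ : ℝ, shiftedCDF δ x) = 1)
    ∧ Filter.Tendsto (fun x : ℝ => ⨆ δ : ℝ, shiftedCDF δ x)
        (nhdsWithin 0 (Set.Iio 0)) (nhds (1 / 2)) := by
  refine ⟨fun x hx => ?_, fun x hx => ?_, ?_⟩
  · rw [key_sup x hx, chiSq_eq_Icc x hx,
      gauss_partition (Real.sqrt_nonneg (-x))]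
  · have hbdd : BddAbove (Set.range fun δ => shiftedCDF δ x) := by
      refine ⟨1, ?_⟩
      rintro _ ⟨δ, rfl⟩
      exact shiftedCDF_le_one δ x
    have h0 : shiftedCDF 0 x = 1 := by
      unfold shiftedCDF
      have hset : {z : ℝ | (0:ℝ) ^ 2 + 2 * 0 * z ≤ x} = Set.univ := by
        ext z
        simp only [Set.mem_setOf_eq, Set.mem_univ, iff_true]
        nlinarith
      rw [hset, measure_univ]
      simp
    refine le_antisymm (ciSup_le fun δ => shiftedCDF_le_one δ x) ?_
    calc (1:ℝ) = shiftedCDF 0 x := h0.symm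
      _ ≤ ⨆ δ : ℝ, shiftedCDF δ x := le_ciSup hbdd _
  · have hinner : Filter.Tendsto (fun x : ℝ => -Real.sqrt (-x))
        (nhdsWithin 0 (Set.Iio 0)) (nhdsWithin 0 (Set.Iio 0)) := by
      apply tendsto_nhdsWithin_of_tendsto_nhds_of_eventually_within
      · have hc : Continuous (fun x : ℝ => -Real.sqrt (-x)) :=
          (Real.continuous_sqrt.comp continuous_neg).neg
        have := hc.tendsto 0
        simp only [neg_zero, Real.sqrt_zero] at this
        exact this.mono_left nhdsWithin_le_nhds
      · filter_upwards [self_mem_nhdsWithin] with x hx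
        simp only [Set.mem_Iio] at hx ⊢
        have : 0 < Real.sqrt (-x) := Real.sqrt_pos.mpr (by linarith)
        linarith
    have hcomp := gaussF_tendsto.comp hinner
    refine hcomp.congr' ?_
    filter_upwards [self_mem_nhdsWithin] with x hx
    simp only [Set.mem_Iio] at hx
    exact (key_sup x hx).symm
end

section
/- Let Z₁, Z₂ be independent standard normal random variables and for γ ∈ ℝ let F_γ(x) = P((Z₁ + γ)² - Z₂² ≤ x). Then for every x ∈ ℝ, γ = 0 is the unique maximizer of γ ↦ F_γ(x); hence the envelope distribution of the family {F_γ : γ ∈ ℝ} is the distribution of Z₁² - Z₂². -/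
open MeasureTheory ProbabilityTheory

/-- CDF of `(Z₁ + γ)² - Z₂²` for independent standard normals `Z₁, Z₂`. -/
noncomputable def besselFamilyCDF (γ x : ℝ) : ℝ :=
  (((gaussianReal 0 1).prod (gaussianReal 0 1))
    {p : ℝ × ℝ | (p.1 + γ) ^ 2 - p.2 ^ 2 ≤ x}).toReal

namespace BesselEnvelope

open Real Set intervalIntegral
open scoped ENNReal

noncomputable def φ : ℝ → ℝ := gaussianPDFReal 0 1

lemma phi_cont : Continuous φ := by unfold φ gaussianPDFReal; fun_prop

lemma phi_pos (x : ℝ) : 0 < φ x := gaussianPDFReal_pos 0 1 x one_ne_zero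

lemma phi_neg (x : ℝ) : φ (-x) = φ x := by simp [φ, gaussianPDFReal, neg_sq]

lemma phi_lt {u v : ℝ} (h : v ^ 2 < u ^ 2) : φ u < φ v := by
  unfold φ gaussianPDFReal
  have h0 : (0:ℝ) < (√(2 * π * (1:NNReal)))⁻¹ := by
    have := Real.pi_pos; positivity
  refine mul_lt_mul_of_pos_left ?_ h0
  apply Real.exp_lt_exp.mpr
  push_cast
  nlinarith [h]

noncomputable def A (y : ℝ) : ℝ := ∫ t in (0:ℝ)..y, φ t

lemma A_hasDeriv (y : ℝ) : HasDerivAt A (φ y) y :=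
  intervalIntegral.integral_hasDerivAt_right (phi_cont.intervalIntegrable _ _)
    (phi_cont.stronglyMeasurableAtFilter _ _) phi_cont.continuousAt

noncomputable def F (L c : ℝ) : ℝ := ∫ t in (-L - c)..(L - c), φ t

lemma F_eq (L c : ℝ) : F L c = A (L - c) - A (-L - c) :=
  (intervalIntegral.integral_interval_sub_left
    (phi_cont.intervalIntegrable _ _) (phi_cont.intervalIntegrable _ _)).symm

lemma F_hasDeriv (L c : ℝ) : HasDerivAt (F L) (φ (-L - c) - φ (L - c)) c := by
  have h1 : HasDerivAt (fun c : ℝ => A (L - c)) (φ (L - c) * (-1)) c :=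
    (A_hasDeriv (L - c)).comp c (((hasDerivAt_id c).const_sub L))
  have h2 : HasDerivAt (fun c : ℝ => A (-L - c)) (φ (-L - c) * (-1)) c :=
    (A_hasDeriv (-L - c)).comp c (((hasDerivAt_id c).const_sub (-L)))
  have := h1.sub h2
  have heq : (fun c : ℝ => A (L - c) - A (-L - c)) = F L := by
    funext u; rw [F_eq]
  rw [show ((fun c : ℝ => A (L - c)) - fun c : ℝ => A (-L - c)) = F L from heq] at this
  refine this.congr_deriv ?_
  ring

lemma F_strictAntiOn (L : ℝ) (hL : 0 < L) : StrictAntiOn (F L) (Ici 0) := by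
  apply strictAntiOn_of_deriv_neg (convex_Ici 0)
  · exact fun c _ => ((F_hasDeriv L c).differentiableAt).continuousAt.continuousWithinAt
  · intro c hc
    rw [interior_Ici] at hc
    rw [(F_hasDeriv L c).deriv]
    have h1 : φ (-L - c) = φ (L + c) := by rw [← phi_neg (L + c)]; ring_nf
    rw [h1]
    have : φ (L + c) < φ (L - c) := phi_lt (by nlinarith [hL, hc.out])
    linarith

lemma F_even (L c : ℝ) : F L (-c) = F L c := by
  have key : ∀ a b : ℝ, (∫ t in a..b, φ t) = ∫ t in (-b)..(-a), φ t := by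
    intro a b
    rw [← intervalIntegral.integral_comp_neg]
    exact intervalIntegral.integral_congr fun t _ => (phi_neg t).symm
  unfold F
  rw [key]
  congr 1 <;> ring

lemma F_lt (L : ℝ) (hL : 0 < L) {c : ℝ} (hc : c ≠ 0) : F L c < F L 0 := by
  rcases lt_or_gt_of_ne hc with h | h
  · rw [← F_even]
    exact F_strictAntiOn L hL self_mem_Ici (mem_Ici.mpr (by linarith)) (by linarith)
  · exact F_strictAntiOn L hL self_mem_Ici (mem_Ici.mpr h.le) h

lemma F_le (L : ℝ) (hL : 0 ≤ L) (c : ℝ) : F L c ≤ F L 0 := by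
  rcases eq_or_lt_of_le hL with h | h
  · subst h
    unfold F
    have e1 : -(0:ℝ) - c = 0 - c := by ring
    rw [e1, intervalIntegral.integral_same]
    simp
  · rcases eq_or_ne c 0 with rfl | hc
    · exact le_rfl
    · exact (F_lt L h hc).le

lemma F_pos (L : ℝ) (hL : 0 < L) : 0 < F L 0 := by
  unfold F
  rw [sub_zero, sub_zero]
  apply intervalIntegral.intervalIntegral_pos_of_pos_on (phi_cont.intervalIntegrable _ _)
    (fun t _ => phi_pos t) (by linarith)

def seg (γ t : ℝ) : Set ℝ := {z : ℝ | (z + γ) ^ 2 ≤ t}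

lemma seg_eq_Icc (γ : ℝ) {t : ℝ} (ht : 0 ≤ t) :
    seg γ t = Icc (-√t - γ) (√t - γ) := by
  ext z
  simp only [seg, mem_setOf_eq, mem_Icc]
  constructor
  · intro h
    have h1 : |z + γ| ≤ √t := by
      rw [← Real.sqrt_sq_eq_abs]
      exact Real.sqrt_le_sqrt h
    rw [abs_le] at h1
    constructor <;> linarith [h1.1, h1.2]
  · rintro ⟨h1, h2⟩
    have := Real.sq_sqrt ht
    nlinarith [Real.sqrt_nonneg t]

lemma seg_empty (γ : ℝ) {t : ℝ} (ht : t < 0) : seg γ t = ∅ := by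
  ext z
  simp only [seg, mem_setOf_eq, mem_empty_iff_false, iff_false, not_le]
  nlinarith [sq_nonneg (z + γ)]

lemma measure_seg (γ : ℝ) {t : ℝ} (ht : 0 ≤ t) :
    gaussianReal 0 1 (seg γ t) = ENNReal.ofReal (F (√t) γ) := by
  rw [seg_eq_Icc γ ht, gaussianReal_apply_eq_integral 0 one_ne_zero]
  congr 1
  rw [MeasureTheory.integral_Icc_eq_integral_Ioc,
      ← intervalIntegral.integral_of_le (by linarith [Real.sqrt_nonneg t])]
  rfl

lemma measure_seg_le (γ t : ℝ) :
    gaussianReal 0 1 (seg γ t) ≤ gaussianReal 0 1 (seg 0 t) := by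
  rcases lt_or_ge t 0 with ht | ht
  · rw [seg_empty γ ht, seg_empty 0 ht]
  · rw [measure_seg γ ht, measure_seg 0 ht]
    exact ENNReal.ofReal_le_ofReal (F_le _ (Real.sqrt_nonneg t) γ)

lemma measure_seg_lt {γ : ℝ} (hγ : γ ≠ 0) {t : ℝ} (ht : 0 < t) :
    gaussianReal 0 1 (seg γ t) < gaussianReal 0 1 (seg 0 t) := by
  rw [measure_seg γ ht.le, measure_seg 0 ht.le]
  have hL : 0 < √t := Real.sqrt_pos.mpr ht
  rw [ENNReal.ofReal_lt_ofReal_iff (F_pos _ hL)]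
  exact F_lt _ hL hγ

lemma measurableSet_S (γ x : ℝ) :
    MeasurableSet {p : ℝ × ℝ | (p.1 + γ) ^ 2 - p.2 ^ 2 ≤ x} :=
  measurableSet_le (by fun_prop) measurable_const

lemma section_eq (γ x z₂ : ℝ) :
    ((fun z₁ => (z₁, z₂)) ⁻¹' {p : ℝ × ℝ | (p.1 + γ) ^ 2 - p.2 ^ 2 ≤ x})
      = seg γ (x + z₂ ^ 2) := by
  ext z₁
  simp only [seg, mem_preimage, mem_setOf_eq]
  constructor <;> intro h <;> linarith

lemma bessel_eq (γ x : ℝ) :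
    besselFamilyCDF γ x
      = (∫⁻ z₂, gaussianReal 0 1 (seg γ (x + z₂ ^ 2)) ∂(gaussianReal 0 1)).toReal := by
  unfold besselFamilyCDF
  rw [Measure.prod_apply_symm (measurableSet_S γ x)]
  congr 1
  exact lintegral_congr fun z₂ => by rw [section_eq]

lemma meas_f (γ x : ℝ) :
    Measurable (fun z₂ => gaussianReal 0 1 (seg γ (x + z₂ ^ 2))) := by
  have h := measurable_measure_prodMk_right (μ := gaussianReal 0 1) (measurableSet_S γ x)
  simpa only [section_eq] using h

lemma lintegral_fin (γ x : ℝ) :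
    (∫⁻ z₂, gaussianReal 0 1 (seg γ (x + z₂ ^ 2)) ∂(gaussianReal 0 1)) ≠ ⊤ := by
  apply ne_of_lt
  calc (∫⁻ z₂, gaussianReal 0 1 (seg γ (x + z₂ ^ 2)) ∂(gaussianReal 0 1))
      ≤ ∫⁻ _, 1 ∂(gaussianReal 0 1) := lintegral_mono fun z => prob_le_one
    _ = 1 := by simp
    _ < ⊤ := ENNReal.one_lt_top

lemma lintegral_lt (x : ℝ) {γ : ℝ} (hγ : γ ≠ 0) :
    (∫⁻ z₂, gaussianReal 0 1 (seg γ (x + z₂ ^ 2)) ∂(gaussianReal 0 1))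
      < ∫⁻ z₂, gaussianReal 0 1 (seg 0 (x + z₂ ^ 2)) ∂(gaussianReal 0 1) := by
  set ν := gaussianReal 0 1 with hν
  set f : ℝ → ℝ≥0∞ := fun z₂ => ν (seg γ (x + z₂ ^ 2)) with hf
  set g : ℝ → ℝ≥0∞ := fun z₂ => ν (seg 0 (x + z₂ ^ 2)) with hg
  have hfg : ∀ z, f z ≤ g z := fun z => measure_seg_le γ _
  have hgm : Measurable g := meas_f 0 x
  have hfm : Measurable f := meas_f γ x
  have hsplit : ∫⁻ z, g z ∂ν = ∫⁻ z, f z ∂ν + ∫⁻ z, (g z - f z) ∂ν := by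
    rw [← lintegral_add_left hfm]
    exact lintegral_congr fun z => (add_tsub_cancel_of_le (hfg z)).symm
  have hpos : 0 < ∫⁻ z, (g z - f z) ∂ν := by
    change 0 < ∫⁻ z, (g - f) z ∂ν
    rw [lintegral_pos_iff_support (hgm.sub hfm)]
    set M : ℝ := √|x| + 1 with hM
    have hM0 : 0 ≤ M := by positivity
    have hsub : Ioi M ⊆ Function.support fun z => g z - f z := by
      intro z hz
      have hzM : M < z := hz
      have hz2 : M ^ 2 < z ^ 2 := by nlinarith
      have ht : 0 < x + z ^ 2 := by
        have hx : |x| < M ^ 2 := by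
          have := Real.sq_sqrt (abs_nonneg x)
          nlinarith [Real.sqrt_nonneg |x|]
        nlinarith [neg_abs_le x]
      have hlt := measure_seg_lt hγ ht
      simp only [Function.mem_support]
      exact (tsub_pos_iff_lt.mpr hlt).ne'
    have hIoi : ν (Ioi M) ≠ 0 := by
      intro h0
      have h1 := (gaussianReal_absolutelyContinuous' 0 one_ne_zero) h0
      rw [Real.volume_Ioi] at h1
      exact ENNReal.top_ne_zero h1
    exact lt_of_lt_of_le (pos_iff_ne_zero.mpr hIoi) (measure_mono hsub)
  calc ∫⁻ z, f z ∂ν < ∫⁻ z, f z ∂ν + ∫⁻ z, (g z - f z) ∂ν :=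
        ENNReal.lt_add_right (lintegral_fin γ x) hpos.ne'
    _ = ∫⁻ z, g z ∂ν := hsplit.symm

lemma bessel_lt (x : ℝ) {γ : ℝ} (hγ : γ ≠ 0) :
    besselFamilyCDF γ x < besselFamilyCDF 0 x := by
  rw [bessel_eq, bessel_eq]
  have hlt := lintegral_lt x hγ
  exact (ENNReal.toReal_lt_toReal (ne_top_of_lt hlt) (lintegral_fin 0 x)).mpr hlt

lemma bessel_le (x γ : ℝ) : besselFamilyCDF γ x ≤ besselFamilyCDF 0 x := by
  rcases eq_or_ne γ 0 with rfl | hγ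
  · exact le_rfl
  · exact (bessel_lt x hγ).le

end BesselEnvelope

/-- For every `x`, `γ = 0` is the unique maximizer of `γ ↦ P((Z₁ + γ)² - Z₂² ≤ x)`;
hence the envelope of this family is the distribution of `Z₁² - Z₂²`. -/
theorem envelope_bessel :
    (∀ x γ : ℝ, γ ≠ 0 → besselFamilyCDF γ x < besselFamilyCDF 0 x)
    ∧ (∀ x : ℝ, (⨆ γ : ℝ, besselFamilyCDF γ x) = besselFamilyCDF 0 x) := by
  constructor
  · exact fun x γ hγ => BesselEnvelope.bessel_lt x hγ
  · intro x
    have hbdd : BddAbove (Set.range fun γ => besselFamilyCDF γ x) := by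
      refine ⟨besselFamilyCDF 0 x, ?_⟩
      rintro y ⟨γ, rfl⟩
      exact BesselEnvelope.bessel_le x γ
    refine le_antisymm (ciSup_le fun γ => BesselEnvelope.bessel_le x γ) ?_
    exact le_ciSup hbdd 0
end

section
/- Consider the trivariate Gaussian model with mean zero and positive definite covariance Σ, parametrized under the constraint σ₁₂σ₃₃ = σ₁₃σ₂₃ (conditional independence X₁ ⊥ X₂ | X₃). Given a sample covariance matrix S (positive definite), the maximum likelihood estimate of Σ within this model sets σ̂₁₁ = s₁₁, σ̂₂₂ = s₂₂, σ̂₃₃ = s₃₃, σ̂₁₃ = s₁₃, σ̂₂₃ = s₂₃, and σ̂₁₂ = s₁₃s₂₃/s₃₃; i.e., this Σ̂ maximizes ℓ(Σ) = -log|Σ| - Tr(SΣ⁻¹) over the set {Σ positive definite : σ₁₂σ₃₃ = σ₁₃σ₂₃}. -/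
open Matrix

section Aux

variable {n : Type*} [Fintype n] [DecidableEq n]

lemma my_congr_posDef {A C : Matrix n n ℝ} (hA : A.PosDef) (hC : C.IsHermitian)
    (hCdet : IsUnit C.det) : (C * A * C).PosDef := by
  refine Matrix.PosDef.of_dotProduct_mulVec_pos ?_ (fun x hx => ?_)
  · unfold Matrix.IsHermitian
    rw [conjTranspose_mul, conjTranspose_mul, hA.1.eq, hC.eq, mul_assoc]
  · have hCx : C *ᵥ x ≠ 0 := by
      have hinj : Function.Injective (C.mulVec) :=
        Matrix.mulVec_injective_iff_isUnit.mpr (Matrix.isUnit_iff_isUnit_det C |>.mpr hCdet)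
      intro h
      exact hx (hinj (by simp [h]))
    have := hA.dotProduct_mulVec_pos hCx
    have hrw : star x ⬝ᵥ ((C * A * C) *ᵥ x) = star (C *ᵥ x) ⬝ᵥ (A *ᵥ (C *ᵥ x)) := by
      rw [star_mulVec, hC.eq, ← Matrix.mulVec_mulVec, ← Matrix.mulVec_mulVec,
        dotProduct_mulVec (star x) C]
    rw [hrw]
    exact this

lemma my_trace_eq_sum_eigenvalues {A : Matrix n n ℝ} (hA : A.IsHermitian) :
    A.trace = ∑ i, hA.eigenvalues i := by
  simpa using hA.trace_eq_sum_eigenvalues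

lemma my_trace_sub_log_det {M : Matrix n n ℝ} (hM : M.PosDef) :
    (Fintype.card n : ℝ) + Real.log M.det ≤ M.trace := by
  have hdet : M.det = ∏ i, hM.1.eigenvalues i := by
    simpa using hM.1.det_eq_prod_eigenvalues
  rw [hdet, my_trace_eq_sum_eigenvalues hM.1,
    Real.log_prod (fun i _ => (hM.eigenvalues_pos i).ne')]
  have : (Fintype.card n : ℝ) = ∑ _i : n, (1 : ℝ) := by simp
  rw [this, ← Finset.sum_add_distrib]
  refine Finset.sum_le_sum fun i _ => ?_
  have := Real.log_le_sub_one_of_pos (hM.eigenvalues_pos i)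
  linarith

open scoped MatrixOrder in
lemma my_key_ineq {A B : Matrix n n ℝ} (hA : A.PosDef) (hB : B.PosDef) :
    (Fintype.card n : ℝ) + Real.log A.det - Real.log B.det ≤ (A * B⁻¹).trace := by
  have hBi : (B⁻¹).PosDef := hB.inv
  set C := CFC.sqrt (B⁻¹) with hCdef
  have hC : C.PosSemidef := (CFC.sqrt_nonneg _).posSemidef
  have hCC : C * C = B⁻¹ := CFC.sqrt_mul_sqrt_self _ hBi.posSemidef.nonneg
  have hBdet : 0 < B.det := hB.det_pos
  have hBinvdet : (B⁻¹).det = (B.det)⁻¹ := by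
    rw [Matrix.det_nonsing_inv, Ring.inverse_eq_inv']
  have h2 : C.det * C.det = (B.det)⁻¹ := by rw [← Matrix.det_mul, hCC, hBinvdet]
  have hCdet : IsUnit C.det := by
    have : C.det ≠ 0 := by
      intro h; rw [h, mul_zero] at h2
      exact (inv_ne_zero hBdet.ne') h2.symm
    exact this.isUnit
  have hM : (C * A * C).PosDef := my_congr_posDef hA hC.1 hCdet
  have htr : (C * A * C).trace = (A * B⁻¹).trace := by
    rw [Matrix.trace_mul_cycle, hCC, Matrix.trace_mul_comm]
  have hdet : (C * A * C).det = A.det * (B.det)⁻¹ := by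
    rw [Matrix.det_mul, Matrix.det_mul]
    linear_combination A.det * h2
  have := my_trace_sub_log_det hM
  rw [htr, hdet, Real.log_mul hA.det_pos.ne' (by positivity), Real.log_inv] at this
  linarith

end Aux

/-- The candidate MLE within the conditional-independence model `σ₁₂σ₃₃ = σ₁₃σ₂₃`:
agrees with `S` except the `(1,2)` (and `(2,1)`) entry, which is `s₁₃s₂₃/s₃₃`. -/
noncomputable def mleCI (S : Matrix (Fin 3) (Fin 3) ℝ) : Matrix (Fin 3) (Fin 3) ℝ :=
  fun i j =>
    if (i = 0 ∧ j = 1) ∨ (i = 1 ∧ j = 0) then S 0 2 * S 1 2 / S 2 2 else S i j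

lemma my_inv_entry_zero {T : Matrix (Fin 3) (Fin 3) ℝ} (hsymm : T.IsSymm)
    (hcon : T 0 1 * T 2 2 = T 0 2 * T 1 2) : T⁻¹ 0 1 = 0 ∧ T⁻¹ 1 0 = 0 := by
  have e21 : T 2 1 = T 1 2 := hsymm.apply 1 2
  have e10 : T 1 0 = T 0 1 := hsymm.apply 0 1
  have e20 : T 2 0 = T 0 2 := hsymm.apply 0 2
  rw [Matrix.inv_def]
  constructor <;>
  · simp only [Matrix.smul_apply, Matrix.adjugate_fin_three, Matrix.cons_val', smul_eq_mul]
    simp [e21, e10, e20]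
    right
    linarith

lemma my_trace_subst (S K : Matrix (Fin 3) (Fin 3) ℝ) (h01 : K 0 1 = 0) (h10 : K 1 0 = 0) :
    (S * K).trace = (mleCI S * K).trace := by
  simp [Matrix.trace_fin_three, Matrix.mul_apply, Fin.sum_univ_three, mleCI, h01, h10]

set_option maxHeartbeats 1000000 in
/-- Given a positive definite sample covariance `S`, the matrix `Σ̂` with
`σ̂ᵢⱼ = sᵢⱼ` except `σ̂₁₂ = s₁₃s₂₃/s₃₃` lies in the model `{Σ ≻ 0 : σ₁₂σ₃₃ = σ₁₃σ₂₃}`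
and maximizes the Gaussian log-likelihood `ℓ(Σ) = -log|Σ| - Tr(SΣ⁻¹)` over it. -/
theorem mle_conditional_independence (S : Matrix (Fin 3) (Fin 3) ℝ)
    (hS : S.PosDef) (hSsymm : S.IsSymm) :
    (mleCI S) 0 1 * (mleCI S) 2 2 = (mleCI S) 0 2 * (mleCI S) 1 2
    ∧ (mleCI S).PosDef
    ∧ ∀ T : Matrix (Fin 3) (Fin 3) ℝ, T.PosDef → T.IsSymm →
        T 0 1 * T 2 2 = T 0 2 * T 1 2 →
        -Real.log T.det - (S * T⁻¹).trace
          ≤ -Real.log (mleCI S).det - (S * (mleCI S)⁻¹).trace := by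
  have e10 : S 1 0 = S 0 1 := hSsymm.apply 0 1
  have e20 : S 2 0 = S 0 2 := hSsymm.apply 0 2
  have e21 : S 2 1 = S 1 2 := hSsymm.apply 1 2
  -- s33 > 0
  have h22 : 0 < S 2 2 := by
    have hx : (![(0:ℝ),0,1]) ≠ 0 := by
      intro h; have := congrFun h 2; simp at this
    have := hS.dotProduct_mulVec_pos hx
    simpa [dotProduct, Matrix.mulVec, Fin.sum_univ_three] using this
  -- principal minor {0,2}
  have hA : 0 < S 0 0 * S 2 2 - S 0 2 * S 0 2 := by
    have hx : (![S 2 2, 0, -(S 0 2)]) ≠ 0 := by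
      intro h; have := congrFun h 0; simp at this; exact h22.ne' this
    have := hS.dotProduct_mulVec_pos hx
    simp [dotProduct, Matrix.mulVec, Fin.sum_univ_three, e20] at this
    nlinarith [this, h22]
  -- principal minor {1,2}
  have hBm : 0 < S 1 1 * S 2 2 - S 1 2 * S 1 2 := by
    have hx : (![0, S 2 2, -(S 1 2)]) ≠ 0 := by
      intro h; have := congrFun h 1; simp at this; exact h22.ne' this
    have := hS.dotProduct_mulVec_pos hx
    simp [dotProduct, Matrix.mulVec, Fin.sum_univ_three, e21] at this
    nlinarith [this, h22]
  -- symmetry of mleCI S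
  have hMsymm : (mleCI S).IsSymm := by
    refine Matrix.IsSymm.ext fun i j => ?_
    fin_cases i <;> fin_cases j <;> simp [mleCI, e10, e20, e21]
  have hMherm : (mleCI S).IsHermitian := by
    rw [Matrix.IsHermitian, Matrix.conjTranspose_eq_transpose_of_trivial]
    exact hMsymm.eq
  -- entries of mleCI S
  have m01 : mleCI S 0 1 = S 0 2 * S 1 2 / S 2 2 := by simp [mleCI]
  have m22 : mleCI S 2 2 = S 2 2 := by simp [mleCI]
  have m02 : mleCI S 0 2 = S 0 2 := by simp [mleCI]
  have m12 : mleCI S 1 2 = S 1 2 := by simp [mleCI]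
  have hcon : (mleCI S) 0 1 * (mleCI S) 2 2 = (mleCI S) 0 2 * (mleCI S) 1 2 := by
    rw [m01, m22, m02, m12, div_mul_cancel₀ _ h22.ne']
  -- positive definiteness of mleCI S
  have hMpd : (mleCI S).PosDef := by
    refine Matrix.PosDef.of_dotProduct_mulVec_pos hMherm fun x hx => ?_
    have key : S 2 2 * (star x ⬝ᵥ (mleCI S) *ᵥ x) =
        (S 0 0 * S 2 2 - S 0 2 * S 0 2) * x 0 ^ 2
        + (S 1 1 * S 2 2 - S 1 2 * S 1 2) * x 1 ^ 2
        + (S 2 2 * x 2 + S 0 2 * x 0 + S 1 2 * x 1) ^ 2 := by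
      simp only [dotProduct, Matrix.mulVec, Fin.sum_univ_three, Pi.star_apply,
        star_trivial, mleCI]
      simp [e10, e20, e21]
      field_simp
      ring
    have hpos : 0 < S 2 2 * (star x ⬝ᵥ (mleCI S) *ᵥ x) := by
      by_cases h0 : x 0 = 0
      · by_cases h1 : x 1 = 0
        · have h2 : x 2 ≠ 0 := by
            intro h2
            apply hx
            funext i; fin_cases i <;> assumption
          rw [key, h0, h1]
          have : (0:ℝ) < (S 2 2 * x 2) ^ 2 := by positivity
          nlinarith [this]
        · rw [key]
          nlinarith [mul_pos hBm (mul_self_pos.mpr h1), sq_nonneg (x 0),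
            sq_nonneg (S 2 2 * x 2 + S 0 2 * x 0 + S 1 2 * x 1), hA, sq_nonneg (x 1)]
      · rw [key]
        nlinarith [mul_pos hA (mul_self_pos.mpr h0), sq_nonneg (x 1),
          sq_nonneg (S 2 2 * x 2 + S 0 2 * x 0 + S 1 2 * x 1), hBm, sq_nonneg (x 0)]
    by_contra hc
    push_neg at hc
    nlinarith [mul_nonpos_of_nonneg_of_nonpos h22.le hc]
  refine ⟨hcon, hMpd, fun T hT hTsymm hTcon => ?_⟩
  -- trace identity for the candidate
  obtain ⟨hz01, hz10⟩ := my_inv_entry_zero hMsymm hcon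
  have htrM : (S * (mleCI S)⁻¹).trace = 3 := by
    rw [my_trace_subst S _ hz01 hz10,
      Matrix.mul_nonsing_inv _ (Matrix.isUnit_iff_isUnit_det _ |>.mp hMpd.isUnit)]
    simp [Matrix.trace_one]
  obtain ⟨hzT01, hzT10⟩ := my_inv_entry_zero hTsymm hTcon
  have htrT : (S * T⁻¹).trace = ((mleCI S) * T⁻¹).trace := my_trace_subst S _ hzT01 hzT10
  have hkey := my_key_ineq hMpd hT
  simp only [Fintype.card_fin] at hkey
  rw [htrM, htrT]
  push_cast at hkey
  linarith
end
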